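/- Let t ≥ 2 be an integer and let i, j be two vertices of the infinite distance graph D(t-1, t) with |i - j| = q·t + r, where q, r are nonnegative integers and 0 ≤ r < t. Then the graph distance between i and j satisfies d(i,j) ≤ q + t. -/

import Mathlib

/-- The infinite distance graph on `ℤ` with distance set `D`: distinct integers
`i, j` are adjacent iff `|i - j| ∈ D`. -/
def distGraph (D : Set ℤ) : SimpleGraph ℤ where
  Adj i j := i ≠ j ∧ |i - j| ∈ D
  symm := by
    constructor
    intro i j h
    exact ⟨h.1.symm, by rw [abs_sub_comm]; exact h.2⟩
  loopless := by
    constructor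
    intro i h
    exact h.1 rfl


lemma step_walk (t : ℤ) (ht : 2 ≤ t) (s : ℤ) (hs : |s| = t - 1 ∨ |s| = t)
    (n : ℕ) (x : ℤ) :
    ∃ p : (distGraph {t - 1, t}).Walk x (x + n * s), p.length = n := by
  induction n with
  | zero => exact ⟨SimpleGraph.Walk.nil.copy rfl (by ring), by simp⟩
  | succ n ih =>
    obtain ⟨p, hp⟩ := ih
    have hs0 : s ≠ 0 := by
      rcases hs with h | h <;> intro h0 <;> simp [h0] at h <;> omega
    have hadj : (distGraph {t - 1, t}).Adj (x + n * s) (x + n * s + s) := by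
      constructor
      · intro h; apply hs0; linarith [h]
      · have : |x + n * s - (x + n * s + s)| = |s| := by
          rw [show x + n * s - (x + n * s + s) = -s by ring, abs_neg]
        rw [this]
        rcases hs with h | h
        · exact Or.inl h
        · exact Or.inr h
    exact ⟨(p.concat hadj).copy rfl (by push_cast; ring), by simp [hp]⟩


/-- In `D(t-1,t)` with `t ≥ 2`, if `|i - j| = q·t + r` with `q, r ≥ 0` and `r < t`,
then `d(i,j) ≤ q + t`. -/
theorem distGraph_tsub1_t_dist_le (t : ℤ) (ht : 2 ≤ t) (i j q r : ℤ)
    (hq : 0 ≤ q) (hr0 : 0 ≤ r) (hrt : r < t) (hij : |i - j| = q * t + r) :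
    ((distGraph {t - 1, t}).dist i j : ℤ) ≤ q + t := by
  -- reduce to the case j = i + (q*t + r)
  suffices H : ∀ x : ℤ, ((distGraph {t - 1, t}).dist x (x + (q * t + r)) : ℤ) ≤ q + t by
    rcases abs_cases (i - j) with ⟨h1, _⟩ | ⟨h1, _⟩
    · rw [SimpleGraph.dist_comm]
      have : i = j + (q * t + r) := by omega
      rw [this]; exact H j
    · have : j = i + (q * t + r) := by omega
      rw [this]; exact H i
  intro x
  have ht1 : |t - 1| = t - 1 := abs_of_nonneg (by omega)
  have htt : |t| = t := abs_of_nonneg (by omega)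
  have htm : |-(t-1)| = t - 1 := by rw [abs_neg]; exact ht1
  have htn : |-t| = t := by rw [abs_neg]; exact htt
  by_cases hcase : 2 * r ≤ t
  · -- (q+r) steps of +t, r steps of -(t-1); length q + 2r ≤ q + t
    obtain ⟨p1, hp1⟩ := step_walk t ht t (Or.inr htt) (q + r).toNat x
    obtain ⟨p2, hp2⟩ := step_walk t ht (-(t-1)) (Or.inl htm) r.toNat (x + (q+r).toNat * t)
    have hend : x + (q+r).toNat * t + r.toNat * (-(t-1)) = x + (q * t + r) := by
      have h1 : ((q+r).toNat : ℤ) = q + r := Int.toNat_of_nonneg (by omega)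
      have h2 : (r.toNat : ℤ) = r := Int.toNat_of_nonneg hr0
      rw [h1, h2]; ring
    have := SimpleGraph.dist_le ((p1.append p2).copy rfl hend)
    have hlen : ((p1.append p2).length : ℤ) = (q + r) + r := by
      rw [SimpleGraph.Walk.length_append, hp1, hp2]
      push_cast
      rw [Int.toNat_of_nonneg (by omega), Int.toNat_of_nonneg hr0]
    calc ((distGraph {t - 1, t}).dist x (x + (q * t + r)) : ℤ)
        ≤ ((p1.append p2).copy rfl hend).length := by exact_mod_cast this
      _ = (q + r) + r := by rw [SimpleGraph.Walk.length_copy]; exact hlen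
      _ ≤ q + t := by omega
  · -- q steps of +t, (t-r) steps of +(t-1), (t-r-1) steps of -t
    obtain ⟨p1, hp1⟩ := step_walk t ht t (Or.inr htt) q.toNat x
    obtain ⟨p2, hp2⟩ := step_walk t ht (t-1) (Or.inl ht1) (t-r).toNat (x + q.toNat * t)
    obtain ⟨p3, hp3⟩ := step_walk t ht (-t) (Or.inr htn) (t-r-1).toNat
      (x + q.toNat * t + (t-r).toNat * (t-1))
    have h1 : (q.toNat : ℤ) = q := Int.toNat_of_nonneg hq
    have h2 : ((t-r).toNat : ℤ) = t - r := Int.toNat_of_nonneg (by omega)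
    have h3 : ((t-r-1).toNat : ℤ) = t - r - 1 := Int.toNat_of_nonneg (by omega)
    have hend : x + q.toNat * t + (t-r).toNat * (t-1) + (t-r-1).toNat * (-t)
        = x + (q * t + r) := by
      rw [h1, h2, h3]; ring
    have hd := SimpleGraph.dist_le (((p1.append p2).append p3).copy rfl hend)
    have hlen : (((p1.append p2).append p3).length : ℤ) = q + (t - r) + (t - r - 1) := by
      rw [SimpleGraph.Walk.length_append, SimpleGraph.Walk.length_append, hp1, hp2, hp3]
      push_cast [h1, h2, h3]
      omega
    calc ((distGraph {t - 1, t}).dist x (x + (q * t + r)) : ℤ)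
        ≤ (((p1.append p2).append p3).copy rfl hend).length := by exact_mod_cast hd
      _ = q + (t - r) + (t - r - 1) := by rw [SimpleGraph.Walk.length_copy]; exact hlen
      _ ≤ q + t := by omega
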